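/- (Soundness of d-separation in C-DAGs.) Let G_C be a C-ADMG over an admissible partition C = {C_1, …, C_r} of a finite set V, and let 𝒳, 𝒴, 𝒵 be pairwise disjoint sets of clusters. If 𝒳 and 𝒴 are m-separated by 𝒵 in the cluster graph G_C, then in every ADMG G over V compatible with G_C, the vertex sets ∪𝒳 and ∪𝒴 are m-separated by ∪𝒵 in G. -/

import Mathlib

/-- A directed mixed graph over a vertex type `V`: a set of directed edges and a
symmetric set of bidirected edges between distinct vertices. -/
structure DMG (V : Type) where
  dir : V → V → Prop
  bidir : V → V → Prop
  bidir_symm : ∀ x y, bidir x y → bidir y x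
  dir_ne : ∀ x y, dir x y → x ≠ y
  bidir_ne : ∀ x y, bidir x y → x ≠ y

namespace DMG

variable {V : Type} {I : Type}

/-- `X` is an ancestor of `Y`: there is a directed path of length ≥ 1 from `X` to `Y`. -/
def Anc (G : DMG V) : V → V → Prop := Relation.TransGen G.dir

/-- No directed cycles. -/
def Acyclic (G : DMG V) : Prop := ∀ x, ¬ G.Anc x x

/-- No bidirected edges. -/
def NoBidir (G : DMG V) : Prop := ∀ x y, ¬ G.bidir x y

/-- A DAG: no bidirected edges and no directed cycles. -/
def IsDAG (G : DMG V) : Prop := G.Acyclic ∧ G.NoBidir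

/-- Two vertices are adjacent if joined by a directed or bidirected edge. -/
def Adj (G : DMG V) (x y : V) : Prop := G.dir x y ∨ G.dir y x ∨ G.bidir x y

/-- Ancestral graph: no directed cycle, no almost directed cycle. -/
def Ancestral (G : DMG V) : Prop :=
  G.Acyclic ∧ ∀ x y, G.bidir x y → ¬ G.Anc x y

/-- The cluster graph induced by `G` on the partition of `V` into the fibers of `π`. -/
def clusterGraph (G : DMG V) (π : V → I) : DMG I where
  dir i j := i ≠ j ∧ ∃ x y, π x = i ∧ π y = j ∧ G.dir x y
  bidir i j := i ≠ j ∧ ∃ x y, π x = i ∧ π y = j ∧ G.bidir x y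
  bidir_symm := by
    rintro i j ⟨hne, x, y, hx, hy, hb⟩
    exact ⟨hne.symm, y, x, hy, hx, G.bidir_symm _ _ hb⟩
  dir_ne := fun _ _ h => h.1
  bidir_ne := fun _ _ h => h.1

/-- `G` is compatible with the cluster graph `GC` (over the partition given by the
fibers of `π`) if the cluster graph induced by `G` equals `GC`. -/
def CompatibleWith (G : DMG V) (π : V → I) (GC : DMG I) : Prop :=
  (∀ i j, GC.dir i j ↔ (G.clusterGraph π).dir i j) ∧
  (∀ i j, GC.bidir i j ↔ (G.clusterGraph π).bidir i j)

/-- Walks in a directed mixed graph: each consecutive pair of vertices is joined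
by a directed edge (in either direction) or a bidirected edge, and we remember
which edge is used. -/
inductive Walk (G : DMG V) : V → V → Type
  | nil (x : V) : Walk G x x
  | fwd {x y z : V} (h : G.dir x y) (w : Walk G y z) : Walk G x z
  | bwd {x y z : V} (h : G.dir y x) (w : Walk G y z) : Walk G x z
  | bi  {x y z : V} (h : G.bidir x y) (w : Walk G y z) : Walk G x z

namespace Walk

variable {G : DMG V}

/-- The list of vertices visited by a walk. -/
def support : {x y : V} → Walk G x y → List V
  | _, _, .nil x => [x]
  | _, _, .fwd (x := x) _ w => x :: w.support
  | _, _, .bwd (x := x) _ w => x :: w.support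
  | _, _, .bi (x := x) _ w => x :: w.support

/-- Whether a walk is trivial. -/
def isNil : {x y : V} → Walk G x y → Bool
  | _, _, .nil _ => true
  | _, _, .fwd _ _ => false
  | _, _, .bwd _ _ => false
  | _, _, .bi _ _ => false

/-- Whether the first edge of the walk has an arrowhead at the first vertex. -/
def headAtStart : {x y : V} → Walk G x y → Bool
  | _, _, .nil _ => false
  | _, _, .fwd _ _ => false
  | _, _, .bwd _ _ => true
  | _, _, .bi _ _ => true

/-- The internal (non-endpoint) vertices of a walk, each paired with a Boolean
recording whether it is a collider on the walk (both incident edges of the walk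
have an arrowhead at it). -/
def marked : {x y : V} → Walk G x y → List (V × Bool)
  | _, _, .nil _ => []
  | _, _, .fwd (y := y) _ w => (if w.isNil then [] else [(y, w.headAtStart)]) ++ w.marked
  | _, _, .bwd (y := y) _ w => (if w.isNil then [] else [(y, false)]) ++ w.marked
  | _, _, .bi (y := y) _ w => (if w.isNil then [] else [(y, w.headAtStart)]) ++ w.marked

/-- A walk is a path if its vertices are pairwise distinct. -/
def IsPath {x y : V} (w : Walk G x y) : Prop := w.support.Nodup

/-- A walk is blocked by `S` if it contains a non-collider belonging to `S`, or a
collider such that neither the collider nor any of its descendants belongs to `S`. -/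
def Blocked {x y : V} (w : Walk G x y) (S : Set V) : Prop :=
  ∃ p ∈ w.marked,
    (p.2 = false ∧ p.1 ∈ S) ∨
    (p.2 = true ∧ p.1 ∉ S ∧ ∀ d, G.Anc p.1 d → d ∉ S)

end Walk

/-- `x` and `y` are m-separated by `S` in `G`: every path between `x` and `y`
is blocked by `S`.  (In a DAG this is d-separation.) -/
def MSep (G : DMG V) (x y : V) (S : Set V) : Prop :=
  ∀ w : Walk G x y, w.IsPath → w.Blocked S

/-- Vertex sets `A` and `B` are m-separated by `S`. -/
def MSepSets (G : DMG V) (A B S : Set V) : Prop :=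
  ∀ x ∈ A, ∀ y ∈ B, G.MSep x y S

/-- The induced subgraph of `G` on a set `A` of vertices. -/
def induce (G : DMG V) (A : Set V) : DMG A where
  dir x y := G.dir x.1 y.1
  bidir x y := G.bidir x.1 y.1
  bidir_symm := fun _ _ h => G.bidir_symm _ _ h
  dir_ne := fun _ _ h he => G.dir_ne _ _ h (congrArg Subtype.val he)
  bidir_ne := fun _ _ h he => G.bidir_ne _ _ h (congrArg Subtype.val he)

end DMG

namespace DMG
namespace Walk

variable {V : Type} {G : DMG V} {S : Set V}

/-- A walk is active (unblocked) wrt `S`. -/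
def Active {x z : V} (w : Walk G x z) (S : Set V) : Prop :=
  ∀ p ∈ w.marked, (p.2 = false → p.1 ∉ S) ∧
    (p.2 = true → p.1 ∈ S ∨ ∃ d, G.Anc p.1 d ∧ d ∈ S)

/-- Some occurrence of `v` on the walk has an outgoing directed edge `v → ·`. -/
def OutTail : {a z : V} → Walk G a z → V → Prop
  | _, _, .nil _, _ => False
  | _, _, .fwd (x := x) _ w, v => x = v ∨ OutTail w v
  | _, _, .bwd _ w, v => OutTail w v
  | _, _, .bi _ w, v => OutTail w v

/-- Like `OutTail`, but only occurrences at positions ≥ 1. -/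
def OutTailI : {a z : V} → Walk G a z → V → Prop
  | _, _, .nil _, _ => False
  | _, _, .fwd _ w, v => OutTail w v
  | _, _, .bwd _ w, v => OutTail w v
  | _, _, .bi _ w, v => OutTail w v

/-- "First boundary edge (wrt the clustering `π`) exists and has an arrowhead
at its near vertex." -/
def FBH {I : Type} (π : V → I) : {a z : V} → Walk G a z → Prop
  | _, _, .nil _ => False
  | _, _, .fwd (x := x) (y := y) _ w => π x = π y ∧ FBH π w
  | _, _, .bwd (x := x) (y := y) _ w => π x = π y → FBH π w
  | _, _, .bi (x := x) (y := y) _ w => π x = π y → FBH π w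

@[simp] lemma support_nil (x : V) : (Walk.nil (G := G) x).support = [x] := rfl
@[simp] lemma support_fwd {x y z} (h : G.dir x y) (w : Walk G y z) :
    (Walk.fwd h w).support = x :: w.support := rfl
@[simp] lemma support_bwd {x y z} (h : G.dir y x) (w : Walk G y z) :
    (Walk.bwd h w).support = x :: w.support := rfl
@[simp] lemma support_bi {x y z} (h : G.bidir x y) (w : Walk G y z) :
    (Walk.bi h w).support = x :: w.support := rfl

@[simp] lemma isNil_nil (x : V) : (Walk.nil (G := G) x).isNil = true := rfl
@[simp] lemma isNil_fwd {x y z} (h : G.dir x y) (w : Walk G y z) :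
    (Walk.fwd h w).isNil = false := rfl
@[simp] lemma isNil_bwd {x y z} (h : G.dir y x) (w : Walk G y z) :
    (Walk.bwd h w).isNil = false := rfl
@[simp] lemma isNil_bi {x y z} (h : G.bidir x y) (w : Walk G y z) :
    (Walk.bi h w).isNil = false := rfl

@[simp] lemma headAtStart_nil (x : V) : (Walk.nil (G := G) x).headAtStart = false := rfl
@[simp] lemma headAtStart_fwd {x y z} (h : G.dir x y) (w : Walk G y z) :
    (Walk.fwd h w).headAtStart = false := rfl
@[simp] lemma headAtStart_bwd {x y z} (h : G.dir y x) (w : Walk G y z) :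
    (Walk.bwd h w).headAtStart = true := rfl
@[simp] lemma headAtStart_bi {x y z} (h : G.bidir x y) (w : Walk G y z) :
    (Walk.bi h w).headAtStart = true := rfl

@[simp] lemma marked_nil (x : V) : (Walk.nil (G := G) x).marked = [] := rfl
lemma marked_fwd {x y z} (h : G.dir x y) (w : Walk G y z) :
    (Walk.fwd h w).marked = (if w.isNil then [] else [(y, w.headAtStart)]) ++ w.marked := rfl
lemma marked_bwd {x y z} (h : G.dir y x) (w : Walk G y z) :
    (Walk.bwd h w).marked = (if w.isNil then [] else [(y, false)]) ++ w.marked := rfl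
lemma marked_bi {x y z} (h : G.bidir x y) (w : Walk G y z) :
    (Walk.bi h w).marked = (if w.isNil then [] else [(y, w.headAtStart)]) ++ w.marked := rfl

lemma end_mem_support : ∀ {a z : V} (w : Walk G a z), z ∈ w.support := by
  intro a z w
  induction w with
  | nil x => simp
  | fwd h w ih => simp [ih]
  | bwd h w ih => simp [ih]
  | bi h w ih => simp [ih]

lemma eq_of_isNil : ∀ {a z : V} (w : Walk G a z), w.isNil = true → a = z := by
  intro a z w h
  cases w with
  | nil x => rfl
  | fwd h' w => simp at h
  | bwd h' w => simp at h
  | bi h' w => simp at h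

lemma headAtStart_isNil {a z : V} {w : Walk G a z} (h : w.headAtStart = true) :
    w.isNil = false := by
  cases w with
  | nil x => simp at h
  | fwd h' w => simp at h
  | bwd h' w => rfl
  | bi h' w => rfl

lemma ne_of_isPath {a z : V} (w : Walk G a z) (hp : w.IsPath) (hn : w.isNil = false) :
    a ≠ z := by
  cases w with
  | nil x => simp at hn
  | fwd h w' =>
    simp only [IsPath, support_fwd, List.nodup_cons] at hp
    exact fun he => hp.1 (he ▸ end_mem_support w')
  | bwd h w' =>
    simp only [IsPath, support_bwd, List.nodup_cons] at hp
    exact fun he => hp.1 (he ▸ end_mem_support w')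
  | bi h w' =>
    simp only [IsPath, support_bi, List.nodup_cons] at hp
    exact fun he => hp.1 (he ▸ end_mem_support w')

lemma marked_subset_fwd {x y z} (h : G.dir x y) (w : Walk G y z) {p : V × Bool}
    (hp : p ∈ w.marked) : p ∈ (Walk.fwd h w).marked := by
  rw [marked_fwd]; exact List.mem_append_right _ hp
lemma marked_subset_bwd {x y z} (h : G.dir y x) (w : Walk G y z) {p : V × Bool}
    (hp : p ∈ w.marked) : p ∈ (Walk.bwd h w).marked := by
  rw [marked_bwd]; exact List.mem_append_right _ hp
lemma marked_subset_bi {x y z} (h : G.bidir x y) (w : Walk G y z) {p : V × Bool}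
    (hp : p ∈ w.marked) : p ∈ (Walk.bi h w).marked := by
  rw [marked_bi]; exact List.mem_append_right _ hp

lemma mem_marked_head_fwd {x y z} (h : G.dir x y) (w : Walk G y z) (hn : w.isNil = false) :
    (y, w.headAtStart) ∈ (Walk.fwd h w).marked := by
  rw [marked_fwd, hn]; simp
lemma mem_marked_head_bwd {x y z} (h : G.dir y x) (w : Walk G y z) (hn : w.isNil = false) :
    (y, false) ∈ (Walk.bwd h w).marked := by
  rw [marked_bwd, hn]; simp
lemma mem_marked_head_bi {x y z} (h : G.bidir x y) (w : Walk G y z) (hn : w.isNil = false) :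
    (y, w.headAtStart) ∈ (Walk.bi h w).marked := by
  rw [marked_bi, hn]; simp

lemma Active.of_fwd {x y z} {h : G.dir x y} {w : Walk G y z}
    (hA : (Walk.fwd h w).Active S) : w.Active S :=
  fun p hp => hA p (marked_subset_fwd h w hp)
lemma Active.of_bwd {x y z} {h : G.dir y x} {w : Walk G y z}
    (hA : (Walk.bwd h w).Active S) : w.Active S :=
  fun p hp => hA p (marked_subset_bwd h w hp)
lemma Active.of_bi {x y z} {h : G.bidir x y} {w : Walk G y z}
    (hA : (Walk.bi h w).Active S) : w.Active S :=
  fun p hp => hA p (marked_subset_bi h w hp)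

/-- Lemma F: a vertex having an internal occurrence with an outgoing directed
edge is a non-collider there, hence not in `S` if the walk is active. -/
lemma not_mem_of_outTailI : ∀ {a z : V} (w : Walk G a z), w.Active S →
    ∀ v, OutTailI w v → v ∉ S := by
  intro a z w
  induction w with
  | nil x => intro _ v hv; exact hv.elim
  | fwd h w ih =>
    intro hA v hv
    cases w with
    | nil => exact hv.elim
    | fwd h2 w2 =>
      rcases hv with rfl | hv2
      · exact (hA _ (mem_marked_head_fwd h _ rfl)).1 rfl
      · exact ih hA.of_fwd v hv2
    | bwd h2 w2 => exact ih hA.of_fwd v hv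
    | bi h2 w2 => exact ih hA.of_fwd v hv
  | bwd h w ih =>
    intro hA v hv
    cases w with
    | nil => exact hv.elim
    | fwd h2 w2 =>
      rcases hv with rfl | hv2
      · exact (hA _ (mem_marked_head_bwd h _ rfl)).1 rfl
      · exact ih hA.of_bwd v hv2
    | bwd h2 w2 => exact ih hA.of_bwd v hv
    | bi h2 w2 => exact ih hA.of_bwd v hv
  | bi h w ih =>
    intro hA v hv
    cases w with
    | nil => exact hv.elim
    | fwd h2 w2 =>
      rcases hv with rfl | hv2
      · exact (hA _ (mem_marked_head_bi h _ rfl)).1 rfl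
      · exact ih hA.of_bi v hv2
    | bwd h2 w2 => exact ih hA.of_bi v hv
    | bi h2 w2 => exact ih hA.of_bi v hv

/-- Lemma H: chain lemma.  Following directed edges forward along an active walk
from a vertex reachable from `y`, we either find a directed cycle (impossible) or
an active collider, giving `y ∈ S` or a descendant of `y` in `S`. -/
lemma chain_lemma (hG : G.Acyclic) : ∀ {b z : V} (w : Walk G b z), w.Active S →
    (w.headAtStart = true → b ∈ S ∨ ∃ d, G.Anc b d ∧ d ∈ S) →
    ∀ y, Relation.TransGen G.dir y b → y ∈ w.support →
    y ∈ S ∨ ∃ d, G.Anc y d ∧ d ∈ S := by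
  intro b z w
  induction w with
  | nil x =>
    intro _ _ y hyb hy
    simp at hy
    subst hy
    exact absurd hyb (hG y)
  | @fwd b c z2 h w ih =>
    intro hA hcol y hyb hy
    rcases List.mem_cons.mp hy with rfl | hy'
    · exact absurd hyb (hG y)
    · refine ih hA.of_fwd ?_ y (hyb.tail h) hy'
      intro hh
      exact (hA _ (mem_marked_head_fwd h w (headAtStart_isNil hh))).2 hh
  | @bwd b c z2 h w ih =>
    intro hA hcol y hyb _
    rcases hcol rfl with hb | ⟨d, hd, hdS⟩
    · exact Or.inr ⟨b, hyb, hb⟩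
    · exact Or.inr ⟨d, hyb.trans hd, hdS⟩
  | @bi b c z2 h w ih =>
    intro hA hcol y hyb _
    rcases hcol rfl with hb | ⟨d, hd, hdS⟩
    · exact Or.inr ⟨b, hyb, hb⟩
    · exact Or.inr ⟨d, hyb.trans hd, hdS⟩

/-- Lemma DL: existence of a suffix walk starting at any vertex occurring on
the walk. -/
lemma exists_suffix : ∀ {a z : V} (w : Walk G a z) (v : V), v ∈ w.support →
    ∃ u : Walk G v z, u.support ⊆ w.support ∧ u.support.length ≤ w.support.length ∧
    (∀ p ∈ u.marked, p ∈ w.marked) ∧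
    (u.isNil = false → u.headAtStart = false → OutTail w v) := by
  intro a z w
  induction w with
  | nil x =>
    intro v hv
    simp at hv
    subst hv
    exact ⟨Walk.nil v, by simp, le_rfl, by simp, fun hh => by simp at hh⟩
  | @fwd a b z2 h w ih =>
    intro v hv
    by_cases hvs : v ∈ w.support
    · obtain ⟨u, h1, h2, h3, h4⟩ := ih v hvs
      exact ⟨u, fun t ht => List.mem_cons_of_mem _ (h1 ht), by simpa using Nat.le_succ_of_le h2,
        fun p hp => marked_subset_fwd h w (h3 p hp), fun ha hb => Or.inr (h4 ha hb)⟩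
    · have hva : v = a := by
        rcases List.mem_cons.mp hv with h' | h'
        · exact h'
        · exact absurd h' hvs
      subst hva
      exact ⟨Walk.fwd h w, fun t ht => ht, le_rfl, fun p hp => hp, fun _ _ => Or.inl rfl⟩
  | @bwd a b z2 h w ih =>
    intro v hv
    by_cases hvs : v ∈ w.support
    · obtain ⟨u, h1, h2, h3, h4⟩ := ih v hvs
      exact ⟨u, fun t ht => List.mem_cons_of_mem _ (h1 ht), by simpa using Nat.le_succ_of_le h2,
        fun p hp => marked_subset_bwd h w (h3 p hp), fun ha hb => h4 ha hb⟩
    · have hva : v = a := by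
        rcases List.mem_cons.mp hv with h' | h'
        · exact h'
        · exact absurd h' hvs
      subst hva
      exact ⟨Walk.bwd h w, fun t ht => ht, le_rfl, fun p hp => hp, fun _ hb => by simp at hb⟩
  | @bi a b z2 h w ih =>
    intro v hv
    by_cases hvs : v ∈ w.support
    · obtain ⟨u, h1, h2, h3, h4⟩ := ih v hvs
      exact ⟨u, fun t ht => List.mem_cons_of_mem _ (h1 ht), by simpa using Nat.le_succ_of_le h2,
        fun p hp => marked_subset_bi h w (h3 p hp), fun ha hb => h4 ha hb⟩
    · have hva : v = a := by
        rcases List.mem_cons.mp hv with h' | h'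
        · exact h'
        · exact absurd h' hvs
      subst hva
      exact ⟨Walk.bi h w, fun t ht => ht, le_rfl, fun p hp => hp, fun _ hb => by simp at hb⟩

/-- Lemma B: from an active walk one can extract an active path with the same
endpoints (plus control over the first edge). -/
lemma exists_path (hG : G.Acyclic) :
    ∀ (n : ℕ) {a z : V} (w : Walk G a z), w.support.length ≤ n → w.Active S →
    ∃ p : Walk G a z, p.IsPath ∧ p.Active S ∧ p.support ⊆ w.support ∧
      (p.headAtStart = true → w.headAtStart = true ∨ a ∈ S ∨ ∃ d, G.Anc a d ∧ d ∈ S) ∧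
      (p.headAtStart = false → p.isNil = false → w.headAtStart = false ∨ a ∉ S) := by
  intro n
  induction n with
  | zero =>
    intro a z w hlen _
    exfalso
    cases w <;> simp at hlen
  | succ n ihn =>
    intro a z w hlen hA
    cases w with
    | nil =>
      exact ⟨Walk.nil _, by simp [IsPath], hA, fun t ht => ht, by simp, fun _ h => by simp at h⟩
    | fwd h w' =>
      by_cases hmem : a ∈ w'.support
      · -- jump to a later occurrence of `a`
        obtain ⟨u, hu1, hu2, hu3, hu4⟩ := exists_suffix w' a hmem
        have hAu : u.Active S := fun p hp => hA p (marked_subset_fwd h w' (hu3 p hp))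
        have hlu : u.support.length ≤ n := by
          simp only [support_fwd, List.length_cons] at hlen
          omega
        obtain ⟨p, hp1, hp2, hp3, hp4, hp5⟩ := ihn u hlu hAu
        have hanc : a ∈ S ∨ ∃ d, G.Anc a d ∧ d ∈ S := by
          refine chain_lemma hG w' hA.of_fwd ?_ a (Relation.TransGen.single h) hmem
          intro hh
          exact (hA _ (by simpa [hh] using mem_marked_head_fwd h w' (headAtStart_isNil hh))).2 rfl
        exact ⟨p, hp1, hp2, fun q hq => List.mem_cons_of_mem _ (hu1 (hp3 hq)),
          fun _ => Or.inr hanc, fun _ _ => Or.inl rfl⟩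
      · obtain ⟨q, hq1, hq2, hq3, hq4, hq5⟩ := ihn w' (by
          simp only [support_fwd, List.length_cons] at hlen; omega) hA.of_fwd
        have hnotmem : a ∉ q.support := fun hq => hmem (hq3 hq)
        refine ⟨Walk.fwd h q, ?_, ?_, ?_, by simp, fun _ _ => Or.inl rfl⟩
        · simpa [IsPath] using ⟨hnotmem, hq1⟩
        · intro p hp
          rw [marked_fwd] at hp
          rcases List.mem_append.mp hp with hp | hp
          · -- junction vertex
            have hqn : q.isNil = false := by
              by_contra hc
              simp [Bool.not_eq_false] at hc
              simp [hc] at hp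
            rw [hqn] at hp
            simp only [Bool.false_eq_true, if_false, List.mem_singleton] at hp
            subst hp
            have hbz := ne_of_isPath q hq1 hqn
            have hw'n : w'.isNil = false := by
              by_contra hc
              simp [Bool.not_eq_false] at hc
              exact hbz (eq_of_isNil w' hc)
            constructor
            · intro hf
              rcases hq5 hf hqn with h5 | h5
              · have hmem := mem_marked_head_fwd h w' hw'n
                rw [h5] at hmem
                exact (hA _ hmem).1 rfl
              · exact h5
            · intro ht
              rcases hq4 ht with h4 | h4
              · have hmem := mem_marked_head_fwd h w' hw'n
                rw [h4] at hmem
                exact (hA _ hmem).2 rfl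
              · exact h4
          · exact hq2 p hp
        · intro q' hq'
          rcases List.mem_cons.mp hq' with rfl | hq'
          · simp
          · exact List.mem_cons_of_mem _ (hq3 hq')
    | bwd h w' =>
      by_cases hmem : a ∈ w'.support
      · obtain ⟨u, hu1, hu2, hu3, hu4⟩ := exists_suffix w' a hmem
        have hAu : u.Active S := fun p hp => hA p (marked_subset_bwd h w' (hu3 p hp))
        have hlu : u.support.length ≤ n := by
          simp only [support_bwd, List.length_cons] at hlen
          omega
        obtain ⟨p, hp1, hp2, hp3, hp4, hp5⟩ := ihn u hlu hAu
        refine ⟨p, hp1, hp2, fun q hq => List.mem_cons_of_mem _ (hu1 (hp3 hq)),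
          fun _ => Or.inl rfl, ?_⟩
        intro hf hnn
        rcases hp5 hf hnn with h5 | h5
        · have hun : u.isNil = false := by
            by_contra hc
            simp [Bool.not_eq_false] at hc
            exact (ne_of_isPath p hp1 hnn) (eq_of_isNil u hc)
          have hout := hu4 hun h5
          exact Or.inr (not_mem_of_outTailI (Walk.bwd h w') hA a hout)
        · exact Or.inr h5
      · obtain ⟨q, hq1, hq2, hq3, hq4, hq5⟩ := ihn w' (by
          simp only [support_bwd, List.length_cons] at hlen; omega) hA.of_bwd
        have hnotmem : a ∉ q.support := fun hq => hmem (hq3 hq)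
        refine ⟨Walk.bwd h q, ?_, ?_, ?_, fun _ => Or.inl rfl, fun hf => by simp at hf⟩
        · simpa [IsPath] using ⟨hnotmem, hq1⟩
        · intro p hp
          rw [marked_bwd] at hp
          rcases List.mem_append.mp hp with hp | hp
          · have hqn : q.isNil = false := by
              by_contra hc
              simp [Bool.not_eq_false] at hc
              simp [hc] at hp
            rw [hqn] at hp
            simp only [Bool.false_eq_true, if_false, List.mem_singleton] at hp
            subst hp
            have hbz := ne_of_isPath q hq1 hqn
            have hw'n : w'.isNil = false := by
              by_contra hc
              simp [Bool.not_eq_false] at hc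
              exact hbz (eq_of_isNil w' hc)
            constructor
            · intro _
              exact (hA _ (mem_marked_head_bwd h w' hw'n)).1 rfl
            · intro ht
              simp at ht
          · exact hq2 p hp
        · intro q' hq'
          rcases List.mem_cons.mp hq' with rfl | hq'
          · simp
          · exact List.mem_cons_of_mem _ (hq3 hq')
    | bi h w' =>
      by_cases hmem : a ∈ w'.support
      · obtain ⟨u, hu1, hu2, hu3, hu4⟩ := exists_suffix w' a hmem
        have hAu : u.Active S := fun p hp => hA p (marked_subset_bi h w' (hu3 p hp))
        have hlu : u.support.length ≤ n := by
          simp only [support_bi, List.length_cons] at hlen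
          omega
        obtain ⟨p, hp1, hp2, hp3, hp4, hp5⟩ := ihn u hlu hAu
        refine ⟨p, hp1, hp2, fun q hq => List.mem_cons_of_mem _ (hu1 (hp3 hq)),
          fun _ => Or.inl rfl, ?_⟩
        intro hf hnn
        rcases hp5 hf hnn with h5 | h5
        · have hun : u.isNil = false := by
            by_contra hc
            simp [Bool.not_eq_false] at hc
            exact (ne_of_isPath p hp1 hnn) (eq_of_isNil u hc)
          have hout := hu4 hun h5
          exact Or.inr (not_mem_of_outTailI (Walk.bi h w') hA a hout)
        · exact Or.inr h5
      · obtain ⟨q, hq1, hq2, hq3, hq4, hq5⟩ := ihn w' (by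
          simp only [support_bi, List.length_cons] at hlen; omega) hA.of_bi
        have hnotmem : a ∉ q.support := fun hq => hmem (hq3 hq)
        refine ⟨Walk.bi h q, ?_, ?_, ?_, fun _ => Or.inl rfl, fun hf => by simp at hf⟩
        · simpa [IsPath] using ⟨hnotmem, hq1⟩
        · intro p hp
          rw [marked_bi] at hp
          rcases List.mem_append.mp hp with hp | hp
          · have hqn : q.isNil = false := by
              by_contra hc
              simp [Bool.not_eq_false] at hc
              simp [hc] at hp
            rw [hqn] at hp
            simp only [Bool.false_eq_true, if_false, List.mem_singleton] at hp
            subst hp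
            have hbz := ne_of_isPath q hq1 hqn
            have hw'n : w'.isNil = false := by
              by_contra hc
              simp [Bool.not_eq_false] at hc
              exact hbz (eq_of_isNil w' hc)
            constructor
            · intro hf
              rcases hq5 hf hqn with h5 | h5
              · have hmem := mem_marked_head_bi h w' hw'n
                rw [h5] at hmem
                exact (hA _ hmem).1 rfl
              · exact h5
            · intro ht
              rcases hq4 ht with h4 | h4
              · have hmem := mem_marked_head_bi h w' hw'n
                rw [h4] at hmem
                exact (hA _ hmem).2 rfl
              · exact h4
          · exact hq2 p hp
        · intro q' hq'
          rcases List.mem_cons.mp hq' with rfl | hq'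
          · simp
          · exact List.mem_cons_of_mem _ (hq3 hq')

section Projection

variable {I : Type} {π : V → I} {GC : DMG I} {𝒵 : Set I}

/-- Ancestry projects to ancestry in the cluster graph (or stays in the cluster). -/
lemma anc_proj (hc : G.CompatibleWith π GC) {v d : V} (h : G.Anc v d) :
    π v = π d ∨ GC.Anc (π v) (π d) := by
  induction h with
  | single h1 =>
    rename_i b
    by_cases he : π v = π b
    · exact Or.inl he
    · exact Or.inr (Relation.TransGen.single ((hc.1 _ _).mpr ⟨he, _, _, rfl, rfl, h1⟩))
  | tail h1 h2 ih =>
    rename_i b c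
    by_cases he : π b = π c
    · rw [← he]; exact ih
    · have e : GC.dir (π b) (π c) := (hc.1 _ _).mpr ⟨he, _, _, rfl, rfl, h2⟩
      rcases ih with heq | ha
      · rw [heq]; exact Or.inr (Relation.TransGen.single e)
      · exact Or.inr (ha.tail e)

/-- Lemma H2: if the walk's first boundary edge has an arrowhead at its near
vertex, and the start vertex has an arrowhead into it (encoded by `hcol`), then
the start cluster is a collider with an active status. -/
lemma cluster_collider (hc : G.CompatibleWith π GC) :
    ∀ {b z : V} (w : Walk G b z), w.Active (π ⁻¹' 𝒵) →
    (w.headAtStart = true → b ∈ π ⁻¹' 𝒵 ∨ ∃ d, G.Anc b d ∧ d ∈ π ⁻¹' 𝒵) →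
    FBH π w → π b ∈ 𝒵 ∨ ∃ D, GC.Anc (π b) D ∧ D ∈ 𝒵 := by
  intro b z w
  induction w with
  | nil x => intro _ _ hf; exact hf.elim
  | fwd h w ih =>
    intro hA hcol hf
    obtain ⟨he, hf'⟩ := hf
    rw [he]
    refine ih hA.of_fwd ?_ hf'
    intro hh
    exact (hA _ (by simpa [hh] using mem_marked_head_fwd h w (headAtStart_isNil hh))).2 rfl
  | bwd h w ih =>
    intro hA hcol _
    rcases hcol rfl with hb | ⟨d, hd, hdS⟩
    · exact Or.inl hb
    · rcases anc_proj hc hd with he | ha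
      · exact Or.inl (by rw [he]; exact hdS)
      · exact Or.inr ⟨π d, ha, hdS⟩
  | bi h w ih =>
    intro hA hcol _
    rcases hcol rfl with hb | ⟨d, hd, hdS⟩
    · exact Or.inl hb
    · rcases anc_proj hc hd with he | ha
      · exact Or.inl (by rw [he]; exact hdS)
      · exact Or.inr ⟨π d, ha, hdS⟩

/-- Lemma C: an active walk in `G` projects to an active walk in `GC`. -/
lemma exists_proj_walk (hc : G.CompatibleWith π GC) :
    ∀ {a z : V} (w : Walk G a z), w.Active (π ⁻¹' 𝒵) →
    ∃ W : Walk GC (π a) (π z), W.Active 𝒵 ∧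
      (w.isNil = true → W.isNil = true) ∧
      (W.headAtStart = false → W.isNil = false → ∃ v, π v = π a ∧ OutTail w v) ∧
      (W.headAtStart = true → FBH π w) := by
  intro a z w
  induction w with
  | nil x =>
    intro _
    exact ⟨Walk.nil (π x), by intro p hp; simp at hp, fun _ => rfl,
      fun _ hn => by simp at hn, fun hh => by simp at hh⟩
  | fwd h w' ih =>
    rename_i a b z
    intro hA
    obtain ⟨W', h1, h2, h3, h4⟩ := ih hA.of_fwd
    by_cases hpi : π a = π b
    · rw [hpi]
      refine ⟨W', h1, fun hh => by simp at hh, ?_, ?_⟩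
      · intro hf hn
        obtain ⟨v, hv1, hv2⟩ := h3 hf hn
        exact ⟨v, hv1, Or.inr hv2⟩
      · intro hh
        exact ⟨hpi, h4 hh⟩
    · have e' : GC.dir (π a) (π b) := (hc.1 _ _).mpr ⟨hpi, a, b, rfl, rfl, h⟩
      refine ⟨Walk.fwd e' W', ?_, fun hh => by simp at hh,
        fun _ _ => ⟨a, rfl, Or.inl rfl⟩, fun hh => by simp at hh⟩
      intro p hp
      rw [marked_fwd] at hp
      rcases List.mem_append.mp hp with hp | hp
      · have hWn : W'.isNil = false := by
          by_contra hcn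
          simp [Bool.not_eq_false] at hcn
          simp [hcn] at hp
        rw [hWn] at hp
        simp only [Bool.false_eq_true, if_false, List.mem_singleton] at hp
        subst hp
        have hw'n : w'.isNil = false := by
          by_contra hcn
          simp [Bool.not_eq_false] at hcn
          rw [h2 hcn] at hWn
          simp at hWn
        constructor
        · intro hf
          obtain ⟨v, hv1, hv2⟩ := h3 hf hWn
          have hv3 : v ∉ π ⁻¹' 𝒵 :=
            not_mem_of_outTailI (Walk.fwd h w') hA v hv2
          intro hmem
          exact hv3 (by simpa [Set.mem_preimage, hv1] using hmem)
        · intro ht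
          refine cluster_collider hc w' hA.of_fwd ?_ (h4 ht)
          intro hh
          exact (hA _ (by simpa [hh] using mem_marked_head_fwd h w' hw'n)).2 rfl
      · exact h1 p hp
  | bwd h w' ih =>
    rename_i a b z
    intro hA
    obtain ⟨W', h1, h2, h3, h4⟩ := ih hA.of_bwd
    by_cases hpi : π a = π b
    · rw [hpi]
      refine ⟨W', h1, fun hh => by simp at hh, ?_, ?_⟩
      · intro hf hn
        obtain ⟨v, hv1, hv2⟩ := h3 hf hn
        exact ⟨v, hv1, hv2⟩
      · intro hh _
        exact h4 hh
    · have e' : GC.dir (π b) (π a) := (hc.1 _ _).mpr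
        ⟨fun hh => hpi hh.symm, b, a, rfl, rfl, h⟩
      refine ⟨Walk.bwd e' W', ?_, fun hh => by simp at hh,
        fun hf => by simp at hf, fun _ hh => absurd hh hpi⟩
      intro p hp
      rw [marked_bwd] at hp
      rcases List.mem_append.mp hp with hp | hp
      · have hWn : W'.isNil = false := by
          by_contra hcn
          simp [Bool.not_eq_false] at hcn
          simp [hcn] at hp
        rw [hWn] at hp
        simp only [Bool.false_eq_true, if_false, List.mem_singleton] at hp
        subst hp
        have hw'n : w'.isNil = false := by
          by_contra hcn
          simp [Bool.not_eq_false] at hcn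
          rw [h2 hcn] at hWn
          simp at hWn
        refine ⟨?_, fun ht => by simp at ht⟩
        intro _
        have hb : b ∉ π ⁻¹' 𝒵 := (hA _ (mem_marked_head_bwd h w' hw'n)).1 rfl
        intro hmem
        exact hb (by simpa [Set.mem_preimage] using hmem)
      · exact h1 p hp
  | bi h w' ih =>
    rename_i a b z
    intro hA
    obtain ⟨W', h1, h2, h3, h4⟩ := ih hA.of_bi
    by_cases hpi : π a = π b
    · rw [hpi]
      refine ⟨W', h1, fun hh => by simp at hh, ?_, ?_⟩
      · intro hf hn
        obtain ⟨v, hv1, hv2⟩ := h3 hf hn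
        exact ⟨v, hv1, hv2⟩
      · intro hh _
        exact h4 hh
    · have e' : GC.bidir (π a) (π b) := (hc.2 _ _).mpr ⟨hpi, a, b, rfl, rfl, h⟩
      refine ⟨Walk.bi e' W', ?_, fun hh => by simp at hh,
        fun hf => by simp at hf, fun _ hh => absurd hh hpi⟩
      intro p hp
      rw [marked_bi] at hp
      rcases List.mem_append.mp hp with hp | hp
      · have hWn : W'.isNil = false := by
          by_contra hcn
          simp [Bool.not_eq_false] at hcn
          simp [hcn] at hp
        rw [hWn] at hp
        simp only [Bool.false_eq_true, if_false, List.mem_singleton] at hp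
        subst hp
        have hw'n : w'.isNil = false := by
          by_contra hcn
          simp [Bool.not_eq_false] at hcn
          rw [h2 hcn] at hWn
          simp at hWn
        constructor
        · intro hf
          obtain ⟨v, hv1, hv2⟩ := h3 hf hWn
          have hv3 : v ∉ π ⁻¹' 𝒵 :=
            not_mem_of_outTailI (Walk.bi h w') hA v hv2
          intro hmem
          exact hv3 (by simpa [Set.mem_preimage, hv1] using hmem)
        · intro ht
          refine cluster_collider hc w' hA.of_bi ?_ (h4 ht)
          intro hh
          exact (hA _ (by simpa [hh] using mem_marked_head_bi h w' hw'n)).2 rfl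
      · exact h1 p hp

end Projection

end Walk
end DMG

open DMG in
/-- Soundness of d-separation in C-DAGs: if sets of clusters `𝒳` and
`𝒴` are m-separated by `𝒵` in the C-ADMG `GC`, then in every compatible ADMG `G`,
the unions of the clusters in `𝒳` and `𝒴` are m-separated by the union of `𝒵`. -/
theorem stmt5 {V I : Type} [Fintype V]
    (π : V → I) (hsurj : Function.Surjective π)
    (GC : DMG I) (hadm : GC.Acyclic)
    (𝒳 𝒴 𝒵 : Set I)
    (hXY : Disjoint 𝒳 𝒴) (hXZ : Disjoint 𝒳 𝒵) (hYZ : Disjoint 𝒴 𝒵)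
    (hsep : GC.MSepSets 𝒳 𝒴 𝒵) :
    ∀ G : DMG V, G.Acyclic → G.CompatibleWith π GC →
      G.MSepSets (π ⁻¹' 𝒳) (π ⁻¹' 𝒴) (π ⁻¹' 𝒵) := by
  intro G hG hc x hx y hy w _
  by_contra hb
  have hA : w.Active (π ⁻¹' 𝒵) := by
    intro p hp
    constructor
    · intro h2 h1
      exact hb ⟨p, hp, Or.inl ⟨h2, h1⟩⟩
    · intro h2
      by_contra hcon
      push_neg at hcon
      exact hb ⟨p, hp, Or.inr ⟨h2, hcon.1, hcon.2⟩⟩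
  obtain ⟨W, hWA, -, -, -⟩ := DMG.Walk.exists_proj_walk hc w hA
  obtain ⟨P, hP1, hP2, -, -, -⟩ :=
    DMG.Walk.exists_path hadm W.support.length W le_rfl hWA
  obtain ⟨p, hp, hcase⟩ := hsep (π x) hx (π y) hy P hP1
  rcases hcase with ⟨h2, h1⟩ | ⟨h2, h1, h3⟩
  · exact (hP2 p hp).1 h2 h1
  · rcases (hP2 p hp).2 h2 with hmem | ⟨d, hd, hdS⟩
    · exact h1 hmem
    · exact h3 d hd hdS
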